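/- arXiv:2602.09936 — 2 statements merged into one kernel-verified Lean document; each statement's English description precedes it below -/
import Mathlib

section
/- Let b1 > b2 > 0 and m ∈ ℝ. Let Y1 ~ b1·χ²_d and Y2 ~ b2·χ²_d be scaled chi-squared random variables with d degrees of freedom (not necessarily independent). Then P(Y1 - Y2 ≤ m) ≤ exp(m·(b1-b2)/(8·b1·b2)) · ρ^{d/4}, where ρ = 1 - ((b1-b2)/(b1+b2))² < 1. -/
open MeasureTheory ProbabilityTheory Real ENNReal

lemma lintegral_pi_pow {μ : Measure ℝ} [SigmaFinite μ] {f : ℝ → ℝ≥0∞} (hf : Measurable f) :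
    ∀ d : ℕ, ∫⁻ y : Fin d → ℝ, ∏ i, f (y i) ∂(Measure.pi fun _ => μ)
      = (∫⁻ x, f x ∂μ) ^ d := by
  intro d
  induction d with
  | zero => simp [Measure.pi_of_empty]
  | succ n ih =>
    have mp := (measurePreserving_piFinSuccAbove (fun _ : Fin (n+1) => μ) 0).symm
    have hmeas : Measurable fun y : Fin (n+1) → ℝ => ∏ i, f (y i) :=
      Finset.measurable_prod _ fun i _ => hf.comp (measurable_pi_apply i)
    rw [← mp.lintegral_comp hmeas]
    have heq : ∀ p : ℝ × (Fin n → ℝ),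
        (∏ i, f (((MeasurableEquiv.piFinSuccAbove (fun _ => ℝ) 0).symm p) i))
          = f p.1 * ∏ j, f (p.2 j) := by
      intro p
      rw [Fin.prod_univ_succ]
      simp [MeasurableEquiv.piFinSuccAbove_symm_apply, Fin.zero_succAbove]
    simp_rw [heq]
    rw [lintegral_prod_mul (f := f) (g := fun y : Fin n → ℝ => ∏ j, f (y j)) hf.aemeasurable
      (Finset.measurable_prod _ fun i _ => hf.comp (measurable_pi_apply i)).aemeasurable, ih]
    ring

lemma lintegral_gauss_sq {c : ℝ} (hc : c < 1/2) :
    ∫⁻ x, ENNReal.ofReal (Real.exp (c * x ^ 2)) ∂(gaussianReal 0 1)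
      = ENNReal.ofReal ((Real.sqrt (1 - 2*c))⁻¹) := by
  have hpos : (0:ℝ) < 1/2 - c := by linarith
  rw [gaussianReal_of_var_ne_zero 0 one_ne_zero,
    lintegral_withDensity_eq_lintegral_mul _ (measurable_gaussianPDF 0 1)
      (by measurability)]
  have heq : ∀ x : ℝ, (gaussianPDF 0 1 * fun x => ENNReal.ofReal (Real.exp (c * x ^ 2))) x
      = ENNReal.ofReal ((Real.sqrt (2*π))⁻¹ * Real.exp (-(1/2 - c) * x ^ 2)) := by
    intro x
    simp only [Pi.mul_apply, gaussianPDF, gaussianPDFReal]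
    rw [← ENNReal.ofReal_mul (by positivity)]
    congr 1
    rw [mul_assoc, ← Real.exp_add]
    norm_num
    exact Or.inl (by ring)
  simp_rw [heq]
  rw [← ofReal_integral_eq_lintegral_ofReal
    (((integrable_exp_neg_mul_sq hpos).const_mul _))
    (Filter.Eventually.of_forall fun x => by positivity)]
  congr 1
  rw [MeasureTheory.integral_const_mul, integral_gaussian]
  have hπ : Real.sqrt π ≠ 0 := by positivity
  have h2 : Real.sqrt 2 ≠ 0 := by positivity
  have h3 : Real.sqrt (1/2 - c) ≠ 0 := by positivity
  rw [← Real.sqrt_inv, ← Real.sqrt_mul (by positivity : (0:ℝ) ≤ (2*π)⁻¹), ← Real.sqrt_inv]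
  congr 1
  have hπ' : π ≠ 0 := pi_ne_zero
  have h12 : (1:ℝ) - 2*c ≠ 0 := by linarith
  have hhalf : (1:ℝ)/2 - c ≠ 0 := hpos.ne'
  field_simp

/-- The law of `b` times the sum of squares of `d` i.i.d. standard normal random
variables, i.e. the law of a `b`-scaled chi-squared variable with `d` degrees of
freedom. -/
noncomputable def scaledChiSq (d : ℕ) (b : ℝ) : Measure ℝ :=
  Measure.map (fun y : Fin d → ℝ => b * ∑ i, (y i) ^ 2)
    (Measure.pi fun _ : Fin d => gaussianReal 0 1)

lemma lintegral_scaledChiSq (d : ℕ) {b s : ℝ} (hs : s * b < 1/2) :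
    ∫⁻ x, ENNReal.ofReal (Real.exp (s * x)) ∂(scaledChiSq d b)
      = ENNReal.ofReal ((Real.sqrt (1 - 2*(s*b)))⁻¹) ^ d := by
  rw [scaledChiSq, lintegral_map ((measurable_id'.const_mul s).exp.ennreal_ofReal : Measurable fun x : ℝ => ENNReal.ofReal (Real.exp (s * x))) (by measurability)]
  have heq : ∀ y : Fin d → ℝ,
      ENNReal.ofReal (Real.exp (s * (b * ∑ i, (y i)^2)))
        = ∏ i, ENNReal.ofReal (Real.exp ((s*b) * (y i)^2)) := by
    intro y
    rw [← ENNReal.ofReal_prod_of_nonneg (fun i _ => (Real.exp_pos _).le), ← Real.exp_sum]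
    congr 2
    rw [← Finset.mul_sum]
    ring
  simp_rw [heq]
  rw [lintegral_pi_pow (f := fun x : ℝ => ENNReal.ofReal (Real.exp ((s*b) * x^2)))
    ((measurable_id.pow_const 2 |>.const_mul (s*b)).exp.ennreal_ofReal) d,
    lintegral_gauss_sq hs]

/-- Let `b1 > b2 > 0`, `m ∈ ℝ`, and let `Y1 ~ b1·χ²_d`, `Y2 ~ b2·χ²_d`
(not necessarily independent) on a common probability space. Then
`P(Y1 - Y2 ≤ m) ≤ exp(m·(b1-b2)/(8·b1·b2)) · ρ^{d/4}`, where
`ρ = 1 - ((b1-b2)/(b1+b2))² < 1`. -/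
theorem stmt_0 {Ω : Type*} [MeasurableSpace Ω] (P : Measure Ω) [IsProbabilityMeasure P]
    (d : ℕ) (b1 b2 m : ℝ) (hb2 : 0 < b2) (hb : b2 < b1)
    (Y1 Y2 : Ω → ℝ) (hY1m : Measurable Y1) (hY2m : Measurable Y2)
    (hY1 : Measure.map Y1 P = scaledChiSq d b1)
    (hY2 : Measure.map Y2 P = scaledChiSq d b2) :
    1 - ((b1 - b2) / (b1 + b2)) ^ 2 < 1 ∧
    P {ω | Y1 ω - Y2 ω ≤ m} ≤
      ENNReal.ofReal (Real.exp (m * (b1 - b2) / (8 * b1 * b2)) *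
        (1 - ((b1 - b2) / (b1 + b2)) ^ 2) ^ ((d : ℝ) / 4)) := by
  have hb1 : 0 < b1 := hb2.trans hb
  have hd : 0 < b1 - b2 := by linarith
  have hs : 0 < b1 + b2 := by linarith
  constructor
  · have : 0 < ((b1 - b2) / (b1 + b2)) ^ 2 := by positivity
    linarith
  have hρpos : 0 < 1 - ((b1 - b2) / (b1 + b2)) ^ 2 := by
    have h1 : ((b1 - b2) / (b1 + b2)) ^ 2 < 1 := by
      rw [div_pow, div_lt_one (by positivity)]
      nlinarith
    linarith
  set t : ℝ := (b1 - b2) / (8 * b1 * b2) with ht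
  have htpos : 0 < t := by positivity
  set f : Ω → ℝ≥0∞ := fun ω => ENNReal.ofReal (Real.exp (-t * Y1 ω)) with hfdef
  set g : Ω → ℝ≥0∞ := fun ω => ENNReal.ofReal (Real.exp (t * Y2 ω)) with hgdef
  have hfm : Measurable f := (hY1m.const_mul (-t)).exp.ennreal_ofReal
  have hgm : Measurable g := (hY2m.const_mul t).exp.ennreal_ofReal
  set ε : ℝ≥0∞ := ENNReal.ofReal (Real.exp (-t * m)) with hε
  have hε0 : ε ≠ 0 := by simp [hε, Real.exp_pos]
  have hεtop : ε ≠ ⊤ := ENNReal.ofReal_ne_top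
  -- Markov step
  have hsub : {ω | Y1 ω - Y2 ω ≤ m} ⊆ {ω | ε ≤ (f * g) ω} := by
    intro ω hω
    simp only [Set.mem_setOf_eq] at hω ⊢
    have h1 : -t * m ≤ -t * Y1 ω + t * Y2 ω := by nlinarith
    calc ε ≤ ENNReal.ofReal (Real.exp (-t * Y1 ω + t * Y2 ω)) :=
          ENNReal.ofReal_le_ofReal (Real.exp_le_exp.2 h1)
      _ = f ω * g ω := by
          rw [Real.exp_add, ENNReal.ofReal_mul (Real.exp_pos _).le]
      _ = (f * g) ω := rfl
  have hmarkov := mul_meas_ge_le_lintegral₀ (μ := P) (hfm.mul hgm).aemeasurable ε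
  have hstep1 : P {ω | Y1 ω - Y2 ω ≤ m}
      ≤ ENNReal.ofReal (Real.exp (t * m)) * ∫⁻ ω, (f * g) ω ∂P := by
    have h2 : P {ω | Y1 ω - Y2 ω ≤ m} ≤ P {ω | ε ≤ (f * g) ω} := measure_mono hsub
    have h3 : P {ω | ε ≤ (f * g) ω} ≤ ε⁻¹ * ∫⁻ ω, (f * g) ω ∂P := by
      rw [← ENNReal.div_eq_inv_mul]
      rw [ENNReal.le_div_iff_mul_le (Or.inl hε0) (Or.inl hεtop), mul_comm]
      exact hmarkov
    have h4 : ε⁻¹ = ENNReal.ofReal (Real.exp (t * m)) := by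
      rw [hε, ← ENNReal.ofReal_inv_of_pos (Real.exp_pos _), ← Real.exp_neg]
      ring_nf
    calc P {ω | Y1 ω - Y2 ω ≤ m} ≤ ε⁻¹ * ∫⁻ ω, (f * g) ω ∂P := h2.trans h3
      _ = _ := by rw [h4]
  -- Hölder (Cauchy-Schwarz)
  have hconj : Real.HolderConjugate 2 2 := Real.HolderConjugate.two_two
  have hholder := ENNReal.lintegral_mul_le_Lp_mul_Lq P hconj hfm.aemeasurable hgm.aemeasurable
  -- compute the two lintegrals
  have hf2 : ∀ ω : Ω, f ω ^ (2:ℝ) = ENNReal.ofReal (Real.exp ((-2*t) * Y1 ω)) := by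
    intro ω
    rw [show ((2:ℝ)) = ((2:ℕ):ℝ) by norm_num, ENNReal.rpow_natCast, pow_two, hfdef,
      ← ENNReal.ofReal_mul (Real.exp_pos _).le, ← Real.exp_add]
    congr 2
    ring
  have hg2 : ∀ ω : Ω, g ω ^ (2:ℝ) = ENNReal.ofReal (Real.exp ((2*t) * Y2 ω)) := by
    intro ω
    rw [show ((2:ℝ)) = ((2:ℕ):ℝ) by norm_num, ENNReal.rpow_natCast, pow_two, hgdef,
      ← ENNReal.ofReal_mul (Real.exp_pos _).le, ← Real.exp_add]
    congr 2
    ring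
  have hb1cond : (-2*t) * b1 < 1/2 := by nlinarith
  have h2tb2 : (2*t) * b2 = (b1 - b2) / (4 * b1) := by
    rw [ht]; field_simp; ring
  have hb2cond : (2*t) * b2 < 1/2 := by
    rw [h2tb2, div_lt_iff₀ (by positivity)]
    nlinarith
  have hint1 : ∫⁻ ω, f ω ^ (2:ℝ) ∂P
      = ENNReal.ofReal ((Real.sqrt ((b1+b2)/(2*b2)))⁻¹) ^ d := by
    simp_rw [hf2]
    rw [← lintegral_map ((measurable_id'.const_mul (-2*t)).exp.ennreal_ofReal :
        Measurable fun x : ℝ => ENNReal.ofReal (Real.exp ((-2*t) * x))) hY1m, hY1,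
      lintegral_scaledChiSq d hb1cond]
    congr 4
    rw [ht]; field_simp; ring
  have hint2 : ∫⁻ ω, g ω ^ (2:ℝ) ∂P
      = ENNReal.ofReal ((Real.sqrt ((b1+b2)/(2*b1)))⁻¹) ^ d := by
    simp_rw [hg2]
    rw [← lintegral_map ((measurable_id'.const_mul (2*t)).exp.ennreal_ofReal :
        Measurable fun x : ℝ => ENNReal.ofReal (Real.exp ((2*t) * x))) hY2m, hY2,
      lintegral_scaledChiSq d hb2cond]
    congr 4
    rw [ht]; field_simp; ring
  -- put everything together
  set u1 : ℝ := (Real.sqrt ((b1+b2)/(2*b2)))⁻¹ with hu1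
  set u2 : ℝ := (Real.sqrt ((b1+b2)/(2*b1)))⁻¹ with hu2
  have hu1nn : 0 ≤ u1 := by positivity
  have hu2nn : 0 ≤ u2 := by positivity
  have hbound : P {ω | Y1 ω - Y2 ω ≤ m}
      ≤ ENNReal.ofReal (Real.exp (t * m)) *
        (ENNReal.ofReal ((u1 ^ d) ^ ((1:ℝ)/2)) * ENNReal.ofReal ((u2 ^ d) ^ ((1:ℝ)/2))) := by
    refine hstep1.trans (mul_le_mul_right (hholder.trans_eq ?_) _)
    rw [hint1, hint2, ← ENNReal.ofReal_pow hu1nn, ← ENNReal.ofReal_pow hu2nn,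
      ← ENNReal.ofReal_rpow_of_nonneg (by positivity) (by norm_num),
      ← ENNReal.ofReal_rpow_of_nonneg (by positivity) (by norm_num)]
  refine hbound.trans_eq ?_
  rw [← ENNReal.ofReal_mul (by positivity), ← ENNReal.ofReal_mul (by positivity)]
  congr 1
  have hmeq : t * m = m * (b1 - b2) / (8 * b1 * b2) := by rw [ht]; ring
  have hkey : (u1 ^ d) ^ ((1:ℝ)/2) * (u2 ^ d) ^ ((1:ℝ)/2)
      = (1 - ((b1 - b2) / (b1 + b2)) ^ 2) ^ ((d : ℝ) / 4) := by
    rw [← Real.mul_rpow (by positivity) (by positivity), ← mul_pow]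
    have huv : u1 * u2 = Real.sqrt (1 - ((b1 - b2) / (b1 + b2)) ^ 2) := by
      rw [hu1, hu2, ← Real.sqrt_inv, ← Real.sqrt_inv,
        ← Real.sqrt_mul (by positivity)]
      congr 1
      field_simp
      ring
    rw [huv, Real.sqrt_eq_rpow, ← Real.rpow_natCast (_ ^ ((1:ℝ)/2)) d,
      ← Real.rpow_mul hρpos.le, ← Real.rpow_mul hρpos.le]
    congr 1
    ring
  rw [hmeq, hkey, mul_assoc]
end

section
/- Let {C_1, C_2} be a bipartition of [n], n ≥ 4, that is not equal (up to swapping the two clusters) to the ground-truth bipartition {S_1^⋆, S_2^⋆}, with both clusters and both classes nonempty. Then there exist an index j ∈ {1,2} and a class ℓ ∈ {1,2} such that: (i) C_j contains points of both classes (0 < R^ℓ_j < 1), (ii) R^ℓ_j ≤ R^ℓ where R^ℓ = |S_ℓ^⋆|/n, and consequently (iii) R^ℓ_{j̄} ≥ R^ℓ, where R^ℓ_k = |C_k ∩ S_ℓ^⋆|/|C_k|. In particular R^ℓ_j ≤ R^ℓ ≤ R^ℓ_{j̄} and C_j ∩ S_ℓ^⋆ ≠ ∅. -/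
open Finset

/-- Let `{C 0, C 1}` be a bipartition of `[n]`, `n ≥ 4`, not equal (up
to swap) to the ground-truth bipartition `{S 0, S 1}`, all four sets nonempty. Then
there exist a cluster index `j` and a class `ℓ` such that `C j` is mixed
(`0 < R^ℓ_j < 1`), `R^ℓ_j ≤ R^ℓ ≤ R^ℓ_{j̄}`, and `C j ∩ S ℓ ≠ ∅`. -/
theorem stmt_16 (n : ℕ) (hn : 4 ≤ n) (C S : Fin 2 → Finset (Fin n))
    (hCdisj : Disjoint (C 0) (C 1)) (hCcover : C 0 ∪ C 1 = Finset.univ)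
    (hCne : ∀ j, (C j).Nonempty)
    (hSdisj : Disjoint (S 0) (S 1)) (hScover : S 0 ∪ S 1 = Finset.univ)
    (hSne : ∀ ℓ, (S ℓ).Nonempty)
    (hincorrect : ¬ ((C 0 = S 0 ∧ C 1 = S 1) ∨ (C 0 = S 1 ∧ C 1 = S 0))) :
    ∃ j ℓ : Fin 2,
      0 < (((C j ∩ S ℓ).card : ℝ) / ((C j).card : ℝ)) ∧
      (((C j ∩ S ℓ).card : ℝ) / ((C j).card : ℝ)) < 1 ∧
      (((C j ∩ S ℓ).card : ℝ) / ((C j).card : ℝ)) ≤ ((S ℓ).card : ℝ) / (n : ℝ) ∧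
      ((S ℓ).card : ℝ) / (n : ℝ) ≤
        (((C (j + 1) ∩ S ℓ).card : ℝ) / ((C (j + 1)).card : ℝ)) ∧
      (C j ∩ S ℓ).Nonempty := by
  have npos : 0 < n := by omega
  have hC : (C 0).card + (C 1).card = n := by
    rw [← card_union_of_disjoint hCdisj, hCcover, card_univ, Fintype.card_fin]
  have hS : (S 0).card + (S 1).card = n := by
    rw [← card_union_of_disjoint hSdisj, hScover, card_univ, Fintype.card_fin]
  have hrow : ∀ j : Fin 2, (C j ∩ S 0).card + (C j ∩ S 1).card = (C j).card := by
    intro j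
    rw [← card_union_of_disjoint (hSdisj.mono inter_subset_right inter_subset_right),
      ← inter_union_distrib_left, hScover, inter_univ]
  have hcol : ∀ ℓ : Fin 2, (C 0 ∩ S ℓ).card + (C 1 ∩ S ℓ).card = (S ℓ).card := by
    intro ℓ
    rw [← card_union_of_disjoint (hCdisj.mono inter_subset_left inter_subset_left),
      ← union_inter_distrib_right, hCcover, univ_inter]
  have hC' : ∀ j : Fin 2, (C j).card + (C (j+1)).card = n := by
    intro j; fin_cases j
    · simpa using hC
    · simpa [add_comm] using hC
  have hcol' : ∀ (j ℓ : Fin 2), (C j ∩ S ℓ).card + (C (j+1) ∩ S ℓ).card = (S ℓ).card := by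
    intro j ℓ; fin_cases j
    · simpa using hcol ℓ
    · simpa [add_comm] using hcol ℓ
  -- find a mixed cluster
  obtain ⟨j, hj0, hj1⟩ : ∃ j : Fin 2, (C j ∩ S 0).Nonempty ∧ (C j ∩ S 1).Nonempty := by
    by_contra h
    push_neg at h
    have hsub : ∀ j : Fin 2, C j ⊆ S 0 ∨ C j ⊆ S 1 := by
      intro j
      rcases Finset.eq_empty_or_nonempty (C j ∩ S 0) with h0 | h0
      · right
        intro x hx
        have hxu : x ∈ S 0 ∪ S 1 := by rw [hScover]; exact mem_univ x
        rcases mem_union.mp hxu with hx0 | hx1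
        · exact absurd (mem_inter.mpr ⟨hx, hx0⟩) (by simp [h0])
        · exact hx1
      · left
        have h1 := h j h0
        intro x hx
        have hxu : x ∈ S 0 ∪ S 1 := by rw [hScover]; exact mem_univ x
        rcases mem_union.mp hxu with hx0 | hx1
        · exact hx0
        · exact absurd (mem_inter.mpr ⟨hx, hx1⟩) (by simp [h1])
    -- both clusters in the same class is impossible
    have same : ∀ ℓ : Fin 2, C 0 ⊆ S ℓ → C 1 ⊆ S ℓ → False := by
      intro ℓ h0 h1
      have huniv : (Finset.univ : Finset (Fin n)) ⊆ S ℓ := by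
        rw [← hCcover]; exact union_subset h0 h1
      fin_cases ℓ
      · obtain ⟨x, hx⟩ := hSne 1
        exact (Finset.disjoint_left.mp hSdisj (huniv (mem_univ x)) hx)
      · obtain ⟨x, hx⟩ := hSne 0
        exact (Finset.disjoint_left.mp hSdisj hx (huniv (mem_univ x)))
    -- opposite classes force equality
    have eqcase : ∀ (a b : Fin 2), a ≠ b → C 0 ⊆ S a → C 1 ⊆ S b → C 0 = S a ∧ C 1 = S b := by
      intro a b hab h0 h1
      have hSd : Disjoint (S a) (S b) := by
        fin_cases a <;> fin_cases b <;> simp_all <;> exact hSdisj.symm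
      constructor
      · apply Finset.Subset.antisymm h0
        intro x hx
        have hxu : x ∈ C 0 ∪ C 1 := by rw [hCcover]; exact mem_univ x
        rcases mem_union.mp hxu with hc | hc
        · exact hc
        · exact absurd hx (Finset.disjoint_right.mp hSd (h1 hc))
      · apply Finset.Subset.antisymm h1
        intro x hx
        have hxu : x ∈ C 0 ∪ C 1 := by rw [hCcover]; exact mem_univ x
        rcases mem_union.mp hxu with hc | hc
        · exact absurd (h0 hc) (Finset.disjoint_right.mp hSd hx)
        · exact hc
    rcases hsub 0 with h0 | h0 <;> rcases hsub 1 with h1 | h1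
    · exact same 0 h0 h1
    · exact hincorrect (Or.inl (eqcase 0 1 (by decide) h0 h1))
    · exact hincorrect (Or.inr (eqcase 1 0 (by decide) h0 h1))
    · exact same 1 h0 h1
  have hposℓ : ∀ ℓ : Fin 2, 0 < (C j ∩ S ℓ).card := by
    intro ℓ; fin_cases ℓ
    · exact card_pos.mpr hj0
    · exact card_pos.mpr hj1
  have hrow' : ∀ ℓ : Fin 2, (C j ∩ S ℓ).card + (C j ∩ S (ℓ+1)).card = (C j).card := by
    intro ℓ; fin_cases ℓ
    · simpa using hrow j
    · simpa [add_comm] using hrow j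
  -- choose the class ℓ with R^ℓ_j ≤ R^ℓ
  obtain ⟨ℓ, hkey⟩ : ∃ ℓ : Fin 2,
      ((C j ∩ S ℓ).card : ℝ) * n ≤ ((S ℓ).card : ℝ) * ((C j).card : ℝ) := by
    by_contra h
    push_neg at h
    have h0 := h 0
    have h1 := h 1
    have e1 : ((C j ∩ S 0).card : ℝ) + ((C j ∩ S 1).card : ℝ) = ((C j).card : ℝ) := by
      exact_mod_cast hrow j
    have e2 : ((S 0).card : ℝ) + ((S 1).card : ℝ) = (n : ℝ) := by exact_mod_cast hS
    nlinarith [h0, h1, e1, e2]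
  refine ⟨j, ℓ, ?_, ?_, ?_, ?_, card_pos.mp (hposℓ ℓ)⟩
  all_goals
    have hcj : (0:ℝ) < ((C j).card : ℝ) := by exact_mod_cast card_pos.mpr (hCne j)
    have hcj' : (0:ℝ) < ((C (j+1)).card : ℝ) := by exact_mod_cast card_pos.mpr (hCne (j+1))
    have hnR : (0:ℝ) < (n : ℝ) := by exact_mod_cast npos
    have ha : (0:ℝ) < ((C j ∩ S ℓ).card : ℝ) := by exact_mod_cast hposℓ ℓ
    have haltn : 0 < (C j ∩ S (ℓ+1)).card := hposℓ (ℓ+1)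
    have hacjn : (C j ∩ S ℓ).card < (C j).card := by
      have := hrow' ℓ; omega
    have hacj : ((C j ∩ S ℓ).card : ℝ) < ((C j).card : ℝ) := by exact_mod_cast hacjn
    have hsum1 : ((C j).card : ℝ) + ((C (j+1)).card : ℝ) = (n : ℝ) := by
      exact_mod_cast hC' j
    have hsum2 : ((C j ∩ S ℓ).card : ℝ) + ((C (j+1) ∩ S ℓ).card : ℝ) = ((S ℓ).card : ℝ) := by
      exact_mod_cast hcol' j ℓ
  · exact div_pos ha hcj
  · rw [div_lt_one hcj]; exact hacj
  · rw [div_le_div_iff₀ hcj hnR]; exact hkey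
  · rw [div_le_div_iff₀ hnR hcj']
    nlinarith [hkey, hsum1, hsum2]
end
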